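/- For any two lists A and B of distinct integers with LDS(A) ≤ 2 and LDS(B) ≤ 2, there exists an interleaving C of A and B with LDS(C) ≤ 3. -/

import Mathlib

def LDS (a : List ℤ) : ℕ :=
  ((a.sublists.filter (fun l => decide (l.IsChain (· > ·)))).map List.length).foldr max 0

inductive Interleave : List ℤ → List ℤ → List ℤ → Prop
  | nil : Interleave [] [] []
  | left {A B C : List ℤ} (x : ℤ) : Interleave A B C → Interleave (x :: A) B (x :: C)
  | right {A B C : List ℤ} (x : ℤ) : Interleave A B C → Interleave A (x :: B) (x :: C)

def merg : List ℤ → List ℤ → List ℤ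
  | [], B => B
  | a::A, [] => a::A
  | a::A, b::B => if a < b then a :: merg A (b::B) else b :: merg (a::A) B
termination_by A B => A.length + B.length

lemma interleave_nil_left (B : List ℤ) : Interleave [] B B := by
  induction B with
  | nil => exact .nil
  | cons b B ih => exact .right b ih

lemma interleave_nil_right (A : List ℤ) : Interleave A [] A := by
  induction A with
  | nil => exact .nil
  | cons a A ih => exact .left a ih

lemma interleave_merg : ∀ A B : List ℤ, Interleave A B (merg A B) := by
  intro A B
  induction A, B using merg.induct with
  | case1 B => simpa [merg] using interleave_nil_left B
  | case2 a A => simpa [merg] using interleave_nil_right (a::A)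
  | case3 a A b B h ih => simpa [merg, h] using .left a ih
  | case4 a A b B h ih => simpa [merg, h] using .right b ih

lemma interleave_filter_left {p : ℤ → Bool} {A B C : List ℤ} (h : Interleave A B C)
    (hA : ∀ x ∈ A, p x = true) (hB : ∀ x ∈ B, p x = false) : C.filter p = A := by
  induction h with
  | nil => rfl
  | left x _ ih =>
      simp only [List.filter_cons, hA x (by simp), if_true, ite_true]
      rw [ih (fun y hy => hA y (by simp [hy])) hB]
  | right x _ ih =>
      simp only [List.filter_cons, hB x (by simp)]
      exact ih hA (fun y hy => hB y (by simp [hy]))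

lemma interleave_filter_right {p : ℤ → Bool} {A B C : List ℤ} (h : Interleave A B C)
    (hA : ∀ x ∈ A, p x = false) (hB : ∀ x ∈ B, p x = true) : C.filter p = B := by
  induction h with
  | nil => rfl
  | left x _ ih =>
      simp only [List.filter_cons, hA x (by simp)]
      exact ih (fun y hy => hA y (by simp [hy])) hB
  | right x _ ih =>
      simp only [List.filter_cons, hB x (by simp), if_true, ite_true]
      rw [ih hA (fun y hy => hB y (by simp [hy]))]

lemma mem_merg {x : ℤ} : ∀ {A B : List ℤ}, x ∈ merg A B ↔ x ∈ A ∨ x ∈ B := by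
  intro A B
  induction A, B using merg.induct with
  | case1 B => simp [merg]
  | case2 a A => simp [merg]
  | case3 a A b B h ih => simp [merg, h, ih]; tauto
  | case4 a A b B h ih => simp [merg, h, ih]; tauto

lemma sublist_of_cons_not_mem {u B : List ℤ} {b : ℤ} (h : u.Sublist (b :: B)) (hb : b ∉ u) :
    u.Sublist B := by
  cases h with
  | cons _ h => exact h
  | cons_cons _ h => exact absurd (by simp) hb

lemma chain'_sublist {s t : List ℤ} (h : s.Sublist t) (ht : t.IsChain (· > ·)) :
    s.IsChain (· > ·) := by
  rw [List.isChain_iff_pairwise] at *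
  exact ht.sublist h

lemma foldr_max_le {L : List ℕ} {n : ℕ} : L.foldr max 0 ≤ n ↔ ∀ x ∈ L, x ≤ n := by
  induction L with
  | nil => simp
  | cons a L ih => simp [max_le_iff, ih]

lemma lds_le_iff {l : List ℤ} {n : ℕ} : LDS l ≤ n ↔
    ∀ s : List ℤ, s.Sublist l → s.IsChain (· > ·) → s.length ≤ n := by
  unfold LDS
  rw [foldr_max_le]
  constructor
  · intro h s hs hc
    exact h _ (List.mem_map.mpr ⟨s, List.mem_filter.mpr
      ⟨List.mem_sublists.mpr hs, by simpa using hc⟩, rfl⟩)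
  · intro h x hx
    obtain ⟨s, hs, rfl⟩ := List.mem_map.mp hx
    obtain ⟨h1, h2⟩ := List.mem_filter.mp hs
    exact h s (List.mem_sublists.mp h1) (by simpa using h2)

lemma keyB : ∀ (A B : List ℤ), (A ++ B).Nodup → ∀ x u, x ∈ A → (∀ z ∈ u, z ∈ B) →
    (x :: u).IsChain (· > ·) → u ≠ [] → (x :: u).Sublist (merg A B) →
    ∃ b0, x < b0 ∧ (b0 :: u).Sublist B := by
  intro A B
  induction A, B using merg.induct with
  | case1 B => intro _ x u hx; exact absurd hx (by simp)
  | case2 a A =>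
      intro _ x u _ hu _ hne _
      cases u with
      | nil => exact absurd rfl hne
      | cons z u => exact absurd (hu z (by simp)) (by simp)
  | case3 a A b B hab ih =>
      intro hnd x u hx hu hch hne hsub
      rw [merg, if_pos hab] at hsub
      have hnd' : (A ++ b :: B).Nodup := (List.nodup_cons.mp hnd).2
      have hdisj : List.Disjoint A (b :: B) := List.disjoint_of_nodup_append hnd'
      have haA : a ∉ A := fun h => (List.nodup_cons.mp hnd).1 (by simp [h])
      have haB : a ∉ b :: B := fun h => (List.nodup_cons.mp hnd).1 (by simp [h])
      have hpw := List.isChain_iff_pairwise.mp hch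
      by_cases hxa : x = a
      · subst hxa
        have hu' : u.Sublist (merg A (b :: B)) := by
          cases hsub with
          | cons_cons _ h => exact h
          | cons _ h =>
              exfalso
              have : x ∈ merg A (b :: B) := h.subset (by simp)
              rcases mem_merg.mp this with h1 | h1
              · exact haA h1
              · exact haB h1
        have hub : u.Sublist (b :: B) := by
          have h1 : u.filter (fun z => decide (z ∈ b :: B)) = u :=
            List.filter_eq_self.mpr (fun z hz => by simpa using hu z hz)
          have h2 : (merg A (b :: B)).filter (fun z => decide (z ∈ b :: B)) = b :: B :=
            interleave_filter_right (interleave_merg A (b :: B))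
              (fun y hy => by simpa using fun h => hdisj hy h)
              (fun y hy => by simpa using hy)
          have := hu'.filter (fun z => decide (z ∈ b :: B))
          rwa [h1, h2] at this
        have hblt : ∀ z ∈ u, z < b := fun z hz =>
          lt_trans (List.rel_of_pairwise_cons hpw hz) hab
        have hbu : b ∉ u := fun h => lt_irrefl b (hblt b h)
        exact ⟨b, hab, (sublist_of_cons_not_mem hub hbu).cons₂ b⟩
      · have hsub' : (x :: u).Sublist (merg A (b :: B)) := by
          cases hsub with
          | cons _ h => exact h
          | cons_cons _ h => exact absurd rfl hxa
        have hxA : x ∈ A := by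
          rcases hx with _ | h
          · exact absurd rfl hxa
          · assumption
        exact ih hnd' x u hxA hu hch hne hsub'
  | case4 a A b B hab ih =>
      intro hnd x u hx hu hch hne hsub
      rw [merg, if_neg hab] at hsub
      have hdisj : List.Disjoint (a :: A) (b :: B) := List.disjoint_of_nodup_append hnd
      have hnd' : ((a :: A) ++ B).Nodup :=
        ((List.sublist_cons_self b B).append_left (a :: A)).nodup hnd
      have hxb : x ≠ b := fun h => hdisj hx (by simp [h])
      have hsub' : (x :: u).Sublist (merg (a :: A) B) := by
        cases hsub with
        | cons _ h => exact h
        | cons_cons _ h => exact absurd rfl hxb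
      have hu' : ∀ z ∈ u, z ∈ B := by
        intro z hz
        have hzm : z ∈ merg (a :: A) B := hsub'.subset (by simp [hz])
        rcases mem_merg.mp hzm with h1 | h1
        · exact absurd (hu z hz) (fun h => hdisj h1 h)
        · exact h1
      obtain ⟨b0, hb0, hbsub⟩ := ih hnd' x u hx hu' hch hne hsub'
      exact ⟨b0, hb0, hbsub.cons b⟩

lemma keyA : ∀ (A B : List ℤ), (A ++ B).Nodup → ∀ x u, x ∈ B → (∀ z ∈ u, z ∈ A) →
    (x :: u).IsChain (· > ·) → u ≠ [] → (x :: u).Sublist (merg A B) →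
    ∃ a0, x < a0 ∧ (a0 :: u).Sublist A := by
  intro A B
  induction A, B using merg.induct with
  | case1 B =>
      intro _ x u _ hu _ hne _
      cases u with
      | nil => exact absurd rfl hne
      | cons z u => exact absurd (hu z (by simp)) (by simp)
  | case2 a A => intro _ x u hx; exact absurd hx (by simp)
  | case3 a A b B hab ih =>
      intro hnd x u hx hu hch hne hsub
      rw [merg, if_pos hab] at hsub
      have hnd' : (A ++ b :: B).Nodup := (List.nodup_cons.mp hnd).2
      have hdisj : List.Disjoint (a :: A) (b :: B) := List.disjoint_of_nodup_append hnd
      have hxa : x ≠ a := fun h => hdisj (by simp [h]) hx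
      have hsub' : (x :: u).Sublist (merg A (b :: B)) := by
        cases hsub with
        | cons _ h => exact h
        | cons_cons _ h => exact absurd rfl hxa
      have hu' : ∀ z ∈ u, z ∈ A := by
        intro z hz
        have hzm : z ∈ merg A (b :: B) := hsub'.subset (by simp [hz])
        rcases mem_merg.mp hzm with h1 | h1
        · exact h1
        · exact absurd h1 (fun h => hdisj (by simp [hu z hz]) h)
      obtain ⟨a0, ha0, hasub⟩ := ih hnd' x u hx hu' hch hne hsub'
      exact ⟨a0, ha0, hasub.cons a⟩
  | case4 a A b B hab ih =>
      intro hnd x u hx hu hch hne hsub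
      rw [merg, if_neg hab] at hsub
      have hdisj : List.Disjoint (a :: A) (b :: B) := List.disjoint_of_nodup_append hnd
      have hnd' : ((a :: A) ++ B).Nodup :=
        ((List.sublist_cons_self b B).append_left (a :: A)).nodup hnd
      have hpw := List.isChain_iff_pairwise.mp hch
      have hba : b < a :=
        lt_of_le_of_ne (not_lt.mp hab) (fun e => hdisj (show b ∈ a :: A by simp [e]) (show b ∈ b :: B by simp))
      by_cases hxb : x = b
      · subst hxb
        have hu'' : u.Sublist (merg (a :: A) B) := by
          cases hsub with
          | cons_cons _ h => exact h
          | cons _ h =>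
              exfalso
              have : x ∈ merg (a :: A) B := h.subset (by simp)
              rcases mem_merg.mp this with h1 | h1
              · exact hdisj h1 (by simp)
              · have : (x :: B).Nodup := (List.nodup_append.mp hnd).2.1
                exact (List.nodup_cons.mp this).1 h1
        have hua : u.Sublist (a :: A) := by
          have h1 : u.filter (fun z => decide (z ∈ a :: A)) = u :=
            List.filter_eq_self.mpr (fun z hz => by simpa using hu z hz)
          have h2 : (merg (a :: A) B).filter (fun z => decide (z ∈ a :: A)) = a :: A :=
            interleave_filter_left (interleave_merg (a :: A) B)
              (fun y hy => by simpa using hy)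
              (fun y hy => by simpa using fun h => hdisj h (by simp [hy]))
          have := hu''.filter (fun z => decide (z ∈ a :: A))
          rwa [h1, h2] at this
        have halt : ∀ z ∈ u, z < a := fun z hz =>
          lt_trans (List.rel_of_pairwise_cons hpw hz) hba
        have hau : a ∉ u := fun h => lt_irrefl a (halt a h)
        exact ⟨a, hba, (sublist_of_cons_not_mem hua hau).cons₂ a⟩
      · have hsub' : (x :: u).Sublist (merg (a :: A) B) := by
          cases hsub with
          | cons _ h => exact h
          | cons_cons _ h => exact absurd rfl hxb
        have hxB : x ∈ B := by
          rcases hx with _ | h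
          · exact absurd rfl hxb
          · assumption
        exact ih hnd' x u hxB hu hch hne hsub'

lemma chain'_cons_of_gt {b0 d1 : ℤ} {u : List ℤ} (h : (d1 :: u).IsChain (· > ·))
    (hb : d1 < b0) : (b0 :: u).IsChain (· > ·) := by
  rw [List.isChain_iff_pairwise] at *
  rcases List.pairwise_cons.mp h with ⟨h1, h2⟩
  exact List.pairwise_cons.mpr ⟨fun z hz => lt_trans (h1 z hz) hb, h2⟩

/-- two lists of LDS at most 2 can be merged into a list of LDS at most 3. -/
theorem merge_lds_two_into_three (A B : List ℤ) (hnd : (A ++ B).Nodup)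
    (hA : LDS A ≤ 2) (hB : LDS B ≤ 2) :
    ∃ C : List ℤ, Interleave A B C ∧ LDS C ≤ 3 := by
  rw [lds_le_iff] at hA hB
  refine ⟨merg A B, interleave_merg A B, lds_le_iff.mpr ?_⟩
  intro s hs hc
  by_contra hlen
  push_neg at hlen
  have hdisj : List.Disjoint A B := List.disjoint_of_nodup_append hnd
  set pA : ℤ → Bool := fun z => decide (z ∈ A) with hpA
  set pB : ℤ → Bool := fun z => decide (z ∈ B) with hpB
  have hCA : (merg A B).filter pA = A :=
    interleave_filter_left (interleave_merg A B) (fun y hy => by simp [hpA, hy])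
      (fun y hy => by simpa [hpA] using fun h => hdisj h hy)
  have hCB : (merg A B).filter pB = B :=
    interleave_filter_right (interleave_merg A B)
      (fun y hy => by simpa [hpB] using fun h => hdisj hy h)
      (fun y hy => by simp [hpB, hy])
  have hsA : (s.filter pA).Sublist A := hCA ▸ hs.filter pA
  have hsB : (s.filter pB).Sublist B := hCB ▸ hs.filter pB
  have hlA : (s.filter pA).length ≤ 2 :=
    hA _ hsA (chain'_sublist (List.filter_sublist) hc)
  have hlB : (s.filter pB).length ≤ 2 :=
    hB _ hsB (chain'_sublist (List.filter_sublist) hc)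
  have hmem : ∀ z ∈ s, z ∈ A ∨ z ∈ B := fun z hz => mem_merg.mp (hs.subset hz)
  have hsum : s.length = (s.filter pA).length + (s.filter pB).length := by
    have hcongr : s.filter (fun z => !pA z) = s.filter pB := by
      apply List.filter_congr
      intro z hz
      rcases hmem z hz with h | h
      · have hn : z ∉ B := fun hb => hdisj h hb
        simp [hpA, hpB, h, hn]
      · have hn : z ∉ A := fun ha => hdisj ha h
        simp [hpA, hpB, h, hn]
    have := (List.filter_append_perm pA s).length_eq
    rw [List.length_append, hcongr] at this
    omega
  have h2A : (s.filter pA).length = 2 := by omega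
  have h2B : (s.filter pB).length = 2 := by omega
  cases s with
  | nil => simp at hlen
  | cons d1 t =>
      have hd1 : d1 ∈ merg A B := hs.subset (by simp)
      have hpw := List.isChain_iff_pairwise.mp hc
      rcases mem_merg.mp hd1 with hd1A | hd1B
      · -- d1 ∈ A; two B elements follow
        have hn1 : d1 ∉ B := fun hb => hdisj hd1A hb
        have hfB : (d1 :: t).filter pB = t.filter pB := by
          simp [List.filter_cons, hpB, hn1]
        set u := t.filter pB with hu
        have hulen : u.length = 2 := by rw [hfB] at h2B; exact h2B
        have hune : u ≠ [] := by intro h; rw [h] at hulen; simp at hulen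
        have hsub1 : (d1 :: u).Sublist (d1 :: t) := (List.filter_sublist (l := t)).cons₂ d1
        have hch1 : (d1 :: u).IsChain (· > ·) := chain'_sublist hsub1 hc
        have huB : ∀ z ∈ u, z ∈ B := fun z hz => by
          have := List.of_mem_filter hz
          simpa [hpB] using this
        obtain ⟨b0, hb0, hbsub⟩ := keyB A B hnd d1 u hd1A huB hch1 hune (hsub1.trans hs)
        have hch2 : (b0 :: u).IsChain (· > ·) := chain'_cons_of_gt hch1 hb0
        have := hB _ hbsub hch2
        simp [hulen] at this
      · -- d1 ∈ B; symmetric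
        have hn1 : d1 ∉ A := fun ha => hdisj ha hd1B
        have hfA : (d1 :: t).filter pA = t.filter pA := by
          simp [List.filter_cons, hpA, hn1]
        set u := t.filter pA with hu
        have hulen : u.length = 2 := by rw [hfA] at h2A; exact h2A
        have hune : u ≠ [] := by intro h; rw [h] at hulen; simp at hulen
        have hsub1 : (d1 :: u).Sublist (d1 :: t) := (List.filter_sublist (l := t)).cons₂ d1
        have hch1 : (d1 :: u).IsChain (· > ·) := chain'_sublist hsub1 hc
        have huA : ∀ z ∈ u, z ∈ A := fun z hz => by
          have := List.of_mem_filter hz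
          simpa [hpA] using this
        obtain ⟨a0, ha0, hasub⟩ := keyA A B hnd d1 u hd1B huA hch1 hune (hsub1.trans hs)
        have hch2 : (a0 :: u).IsChain (· > ·) := chain'_cons_of_gt hch1 ha0
        have := hA _ hasub hch2
        simp [hulen] at this
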